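/- In a preferential attachment random caterpillar tree with m ≥ 2 spine vertices, the variance of the degree of an interior spine vertex (2 ≤ i ≤ m-1) at time n equals ((m-2)n^2 + 2(m-2)(m-1)n) / ((m-1)^2 (2m-1)), and the variance of the degree of an endpoint spine vertex (i = 1 or i = m) equals ((2m-3)n^2 + (2m-3)(2m-2)n) / (4(m-1)^2 (2m-1)). -/

import Mathlib

open Finset Filter MeasureTheory

/-- Number of leaves attached to spine vertex `i` after the choice sequence `ω`. -/
def leafCount {m n : ℕ} (ω : Fin n → Fin m) (i : Fin m) : ℕ :=
  (Finset.univ.filter fun k => ω k = i).card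

/-- Number of times vertex `i` was chosen strictly before step `k`. -/
def countBefore {m n : ℕ} (ω : Fin n → Fin m) (i : Fin m) (k : Fin n) : ℕ :=
  (Finset.univ.filter fun j => j < k ∧ ω j = i).card

/-- Probability of a particular choice sequence `ω` in the (preferential-attachment /
Pólya-Eggenberger) urn with initial composition `τ`: at each step a vertex (color) is
chosen with probability proportional to its current count. -/
noncomputable def seqProb {m n : ℕ} (τ : Fin m → ℕ) (ω : Fin n → Fin m) : ℝ :=
  ∏ k : Fin n,
    (((τ (ω k) + countBefore ω (ω k) k : ℕ) : ℝ) / (((∑ i, τ i) + (k : ℕ) : ℕ) : ℝ))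

/-- Initial degrees on the spine: 1 at both endpoints, 2 in the interior. -/
def spineInit (m : ℕ) : Fin m → ℕ := fun i => if i.val = 0 ∨ i.val = m - 1 then 1 else 2

/-- Degree of spine vertex `i` after the choice sequence `ω`. -/
def deg {m n : ℕ} (τ : Fin m → ℕ) (ω : Fin n → Fin m) (i : Fin m) : ℕ :=
  τ i + leafCount ω i

/-- Expected degree of spine vertex `i` at time `n` in the preferential attachment RCT. -/
noncomputable def degExp (m n : ℕ) (i : Fin m) : ℝ :=
  ∑ ω : Fin n → Fin m, seqProb (spineInit m) ω * (deg (spineInit m) ω i : ℝ)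

/-- Expected squared degree of spine vertex `i` at time `n`. -/
noncomputable def degSqExp (m n : ℕ) (i : Fin m) : ℝ :=
  ∑ ω : Fin n → Fin m, seqProb (spineInit m) ω * ((deg (spineInit m) ω i : ℝ)) ^ 2

/-- Expected mixed moment `E[D_{i,n} D_{j,n}]`. -/
noncomputable def degMixed (m n : ℕ) (i j : Fin m) : ℝ :=
  ∑ ω : Fin n → Fin m,
    seqProb (spineInit m) ω * ((deg (spineInit m) ω i : ℝ) * (deg (spineInit m) ω j : ℝ))

lemma leafCount_eq_sum {m n : ℕ} (ω : Fin n → Fin m) (i : Fin m) :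
    leafCount ω i = ∑ k : Fin n, if ω k = i then 1 else 0 := by
  rw [leafCount, Finset.card_filter]

lemma countBefore_eq_sum {m n : ℕ} (ω : Fin n → Fin m) (i : Fin m) (k : Fin n) :
    countBefore ω i k = ∑ j : Fin n, if j < k ∧ ω j = i then 1 else 0 := by
  rw [countBefore, Finset.card_filter]

lemma countBefore_snoc_castSucc {m n : ℕ} (ω : Fin n → Fin m) (j i : Fin m) (k : Fin n) :
    countBefore (Fin.snoc ω j) i (Fin.castSucc k) = countBefore ω i k := by
  rw [countBefore_eq_sum, countBefore_eq_sum, Fin.sum_univ_castSucc]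
  have h1 : ¬ (Fin.last n < Fin.castSucc k) := by
    simp only [Fin.lt_iff_val_lt_val, Fin.val_last, Fin.coe_castSucc, not_lt]
    exact Nat.le_of_lt k.isLt
  simp [h1, Fin.castSucc_lt_castSucc_iff]

lemma countBefore_snoc_last {m n : ℕ} (ω : Fin n → Fin m) (j i : Fin m) :
    countBefore (Fin.snoc ω j) i (Fin.last n) = leafCount ω i := by
  rw [countBefore_eq_sum, leafCount_eq_sum, Fin.sum_univ_castSucc]
  simp [Fin.castSucc_lt_last]

lemma leafCount_snoc {m n : ℕ} (ω : Fin n → Fin m) (j i : Fin m) :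
    leafCount (Fin.snoc ω j) i = leafCount ω i + if j = i then 1 else 0 := by
  rw [leafCount_eq_sum, leafCount_eq_sum, Fin.sum_univ_castSucc]
  simp

lemma deg_snoc {m n : ℕ} (τ : Fin m → ℕ) (ω : Fin n → Fin m) (j i : Fin m) :
    deg τ (Fin.snoc ω j) i = deg τ ω i + if j = i then 1 else 0 := by
  simp [deg, leafCount_snoc, Nat.add_assoc]

lemma sum_leafCount {m n : ℕ} (ω : Fin n → Fin m) :
    ∑ i : Fin m, leafCount ω i = n := by
  simp only [leafCount_eq_sum]
  rw [Finset.sum_comm]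
  simp [Finset.sum_ite_eq]

lemma seqProb_snoc {m n : ℕ} (τ : Fin m → ℕ) (ω : Fin n → Fin m) (j : Fin m) :
    seqProb τ (Fin.snoc ω j) =
      seqProb τ ω * (((τ j + leafCount ω j : ℕ) : ℝ) / (((∑ i, τ i) + n : ℕ) : ℝ)) := by
  unfold seqProb
  rw [Fin.prod_univ_castSucc]
  congr 1
  · apply Finset.prod_congr rfl
    intro k _
    simp [Fin.snoc_castSucc, countBefore_snoc_castSucc]
  · simp [Fin.snoc_last, countBefore_snoc_last]

lemma sum_weights {m n : ℕ} (τ : Fin m → ℕ) (ω : Fin n → Fin m) :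
    ∑ j : Fin m, ((τ j + leafCount ω j : ℕ) : ℝ) = (((∑ i, τ i) + n : ℕ) : ℝ) := by
  have h : ∑ j : Fin m, (τ j + leafCount ω j) = (∑ i, τ i) + n := by
    rw [Finset.sum_add_distrib, sum_leafCount]
  rw [← Nat.cast_sum, h]

lemma step {m n : ℕ} (τ : Fin m → ℕ) (i : Fin m) (f : ℕ → ℝ) :
    ∑ ω : Fin (n+1) → Fin m, seqProb τ ω * f (deg τ ω i)
    = ∑ ω : Fin n → Fin m, seqProb τ ω *
        (((deg τ ω i : ℝ)) * f (deg τ ω i + 1)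
          + ((((∑ i, τ i) + n : ℕ) : ℝ) - (deg τ ω i : ℝ)) * f (deg τ ω i))
        / (((∑ i, τ i) + n : ℕ) : ℝ) := by
  rw [← (Fin.snocEquiv (fun _ => Fin m)).sum_comp
        (fun ω => seqProb τ ω * f (deg τ ω i))]
  rw [Fintype.sum_prod_type]
  rw [Finset.sum_comm]
  apply Finset.sum_congr rfl
  intro ω _
  have key : ∀ j : Fin m, seqProb τ (Fin.snoc ω j) * f (deg τ (Fin.snoc ω j) i)
      = seqProb τ ω / (((∑ i, τ i) + n : ℕ) : ℝ) *
          (((τ j + leafCount ω j : ℕ) : ℝ) * f (deg τ ω i + if j = i then 1 else 0)) := by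
    intro j
    rw [seqProb_snoc, deg_snoc]
    ring
  simp only [show ∀ x : Fin m, (Fin.snocEquiv fun _ => Fin m) (x, ω) = Fin.snoc ω x from fun _ => rfl]
  calc ∑ j : Fin m, seqProb τ (Fin.snoc ω j) * f (deg τ (Fin.snoc ω j) i)
      = seqProb τ ω / (((∑ i, τ i) + n : ℕ) : ℝ) *
          ∑ j : Fin m, ((τ j + leafCount ω j : ℕ) : ℝ) * f (deg τ ω i + if j = i then 1 else 0) := by
        rw [Finset.mul_sum]; exact Finset.sum_congr rfl fun j _ => key j
    _ = _ := by
        have split : ∑ j : Fin m, ((τ j + leafCount ω j : ℕ) : ℝ) * f (deg τ ω i + if j = i then 1 else 0)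
            = (((deg τ ω i : ℝ)) * f (deg τ ω i + 1)
              + ((((∑ i, τ i) + n : ℕ) : ℝ) - (deg τ ω i : ℝ)) * f (deg τ ω i)) := by
          have : ∀ j : Fin m, ((τ j + leafCount ω j : ℕ) : ℝ) * f (deg τ ω i + if j = i then 1 else 0)
              = (if j = i then ((τ j + leafCount ω j : ℕ) : ℝ) * f (deg τ ω i + 1)
                  - ((τ j + leafCount ω j : ℕ) : ℝ) * f (deg τ ω i) else 0)
                + ((τ j + leafCount ω j : ℕ) : ℝ) * f (deg τ ω i) := by
            intro j
            by_cases h : j = i <;> simp [h]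
          rw [Finset.sum_congr rfl fun j _ => this j, Finset.sum_add_distrib,
            Finset.sum_ite_eq' Finset.univ i, ← Finset.sum_mul, sum_weights]
          simp [deg]
          ring
        rw [split]; ring

lemma moment1 {m : ℕ} (τ : Fin m → ℕ) (i : Fin m) (hS : 0 < ∑ i, τ i) (n : ℕ) :
    ∑ ω : Fin n → Fin m, seqProb τ ω * (deg τ ω i : ℝ)
    = (τ i : ℝ) * (((∑ i, τ i : ℕ) : ℝ) + n) / ((∑ i, τ i : ℕ) : ℝ) := by
  induction n with
  | zero =>
    have hS' : ((∑ i, τ i : ℕ) : ℝ) ≠ 0 := Nat.cast_ne_zero.mpr hS.ne'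
    rw [Fintype.sum_unique]
    simp [seqProb, deg, leafCount]
    have h1 : (∑ x : Fin m, (τ x : ℝ)) ≠ 0 := by push_cast at hS'; exact hS'
    rw [mul_div_assoc, div_self h1, mul_one]
  | succ n ih =>
    rw [step τ i (fun d => (d : ℝ)) (n := n)]
    have key : ∀ ω : Fin n → Fin m, seqProb τ ω *
        (((deg τ ω i : ℝ)) * ((deg τ ω i + 1 : ℕ) : ℝ)
          + ((((∑ i, τ i) + n : ℕ) : ℝ) - (deg τ ω i : ℝ)) * ((deg τ ω i : ℕ) : ℝ))
        / (((∑ i, τ i) + n : ℕ) : ℝ)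
        = (seqProb τ ω * (deg τ ω i : ℝ)) *
            (((((∑ i, τ i) + n : ℕ) : ℝ) + 1) / (((∑ i, τ i) + n : ℕ) : ℝ)) := by
      intro ω
      rw [show seqProb τ ω *
        (((deg τ ω i : ℝ)) * ((deg τ ω i + 1 : ℕ) : ℝ)
          + ((((∑ i, τ i) + n : ℕ) : ℝ) - (deg τ ω i : ℝ)) * ((deg τ ω i : ℕ) : ℝ))
        = (seqProb τ ω * (deg τ ω i : ℝ)) * ((((∑ i, τ i) + n : ℕ) : ℝ) + 1) by push_cast; ring]
      rw [mul_div_assoc]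
    rw [Finset.sum_congr rfl fun ω _ => key ω, ← Finset.sum_mul, ih]
    have h1 : (∑ x : Fin m, (τ x : ℝ)) ≠ 0 := by
      have := Nat.cast_ne_zero (R := ℝ).mpr hS.ne'
      push_cast at this; exact this
    have h2 : (∑ x : Fin m, (τ x : ℝ)) + (n : ℝ) ≠ 0 := by positivity
    push_cast
    field_simp
    ring

lemma moment2 {m : ℕ} (τ : Fin m → ℕ) (i : Fin m) (hS : 0 < ∑ i, τ i) (n : ℕ) :
    ∑ ω : Fin n → Fin m, seqProb τ ω * ((deg τ ω i : ℝ) * ((deg τ ω i : ℝ) + 1))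
    = (τ i : ℝ) * ((τ i : ℝ) + 1) * ((((∑ i, τ i : ℕ) : ℝ) + n) * (((∑ i, τ i : ℕ) : ℝ) + n + 1))
        / (((∑ i, τ i : ℕ) : ℝ) * (((∑ i, τ i : ℕ) : ℝ) + 1)) := by
  induction n with
  | zero =>
    have hS' : ((∑ i, τ i : ℕ) : ℝ) ≠ 0 := Nat.cast_ne_zero.mpr hS.ne'
    have hS1 : ((∑ i, τ i : ℕ) : ℝ) + 1 ≠ 0 := by positivity
    rw [Fintype.sum_unique]
    simp [seqProb, deg, leafCount]
    have h1 : (∑ x : Fin m, (τ x : ℝ)) ≠ 0 := by push_cast at hS'; exact hS'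
    have h1' : (∑ x : Fin m, (τ x : ℝ)) + 1 ≠ 0 := by push_cast at hS1; exact hS1
    rw [mul_div_assoc, div_self (mul_ne_zero h1 h1'), mul_one]
  | succ n ih =>
    rw [step τ i (fun d => (d : ℝ) * ((d : ℝ) + 1)) (n := n)]
    have key : ∀ ω : Fin n → Fin m, seqProb τ ω *
        (((deg τ ω i : ℝ)) * (((deg τ ω i + 1 : ℕ) : ℝ) * (((deg τ ω i + 1 : ℕ) : ℝ) + 1))
          + ((((∑ i, τ i) + n : ℕ) : ℝ) - (deg τ ω i : ℝ))
              * ((deg τ ω i : ℝ) * ((deg τ ω i : ℝ) + 1)))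
        / (((∑ i, τ i) + n : ℕ) : ℝ)
        = (seqProb τ ω * ((deg τ ω i : ℝ) * ((deg τ ω i : ℝ) + 1))) *
            (((((∑ i, τ i) + n : ℕ) : ℝ) + 2) / (((∑ i, τ i) + n : ℕ) : ℝ)) := by
      intro ω
      rw [show seqProb τ ω *
        (((deg τ ω i : ℝ)) * (((deg τ ω i + 1 : ℕ) : ℝ) * (((deg τ ω i + 1 : ℕ) : ℝ) + 1))
          + ((((∑ i, τ i) + n : ℕ) : ℝ) - (deg τ ω i : ℝ))
              * ((deg τ ω i : ℝ) * ((deg τ ω i : ℝ) + 1)))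
        = (seqProb τ ω * ((deg τ ω i : ℝ) * ((deg τ ω i : ℝ) + 1)))
            * ((((∑ i, τ i) + n : ℕ) : ℝ) + 2) by push_cast; ring]
      rw [mul_div_assoc]
    rw [Finset.sum_congr rfl fun ω _ => key ω, ← Finset.sum_mul, ih]
    have h1 : (∑ x : Fin m, (τ x : ℝ)) ≠ 0 := by
      have := Nat.cast_ne_zero (R := ℝ).mpr hS.ne'
      push_cast at this; exact this
    have h2 : (∑ x : Fin m, (τ x : ℝ)) + (n : ℝ) ≠ 0 := by positivity
    have h3 : (∑ x : Fin m, (τ x : ℝ)) + 1 ≠ 0 := by positivity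
    push_cast
    field_simp
    ring

lemma sum_spineInit (m : ℕ) (hm : 2 ≤ m) : ∑ i, spineInit m i = 2 * m - 2 := by
  have hcard : ∑ i : Fin m, (if (i.val = 0 ∨ i.val = m - 1) then 1 else 0) = 2 := by
    rw [← Finset.card_filter]
    have hne : (⟨0, by omega⟩ : Fin m) ≠ ⟨m - 1, by omega⟩ := by
      simp only [ne_eq, Fin.mk.injEq]; omega
    have : (Finset.univ.filter fun i : Fin m => i.val = 0 ∨ i.val = m - 1)
        = {⟨0, by omega⟩, ⟨m - 1, by omega⟩} := by
      ext j
      simp [Fin.ext_iff]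
    rw [this, Finset.card_insert_of_notMem (by simp [hne]), Finset.card_singleton]
  have h2 : ∀ i : Fin m, spineInit m i + (if (i.val = 0 ∨ i.val = m - 1) then 1 else 0) = 2 := by
    intro i; unfold spineInit; split <;> simp
  have := Finset.sum_congr rfl (fun i (_ : i ∈ Finset.univ) => h2 i)
  rw [Finset.sum_add_distrib, hcard] at this
  simp at this
  omega

/-- the variance of the degree of spine vertex `i` at time `n` equals
`((m-2)n² + 2(m-2)(m-1)n)/((m-1)²(2m-1))` for interior vertices and
`((2m-3)n² + (2m-3)(2m-2)n)/(4(m-1)²(2m-1))` for the two endpoint vertices. -/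
theorem pa_rct_degree_variance (m : ℕ) (hm : 2 ≤ m) (n : ℕ) (i : Fin m) :
    degSqExp m n i - (degExp m n i) ^ 2 =
      if i.val = 0 ∨ i.val = m - 1 then
        ((2 * (m : ℝ) - 3) * (n : ℝ) ^ 2 + (2 * (m : ℝ) - 3) * (2 * (m : ℝ) - 2) * n)
          / (4 * ((m : ℝ) - 1) ^ 2 * (2 * (m : ℝ) - 1))
      else
        (((m : ℝ) - 2) * (n : ℝ) ^ 2 + 2 * ((m : ℝ) - 2) * ((m : ℝ) - 1) * n)
          / (((m : ℝ) - 1) ^ 2 * (2 * (m : ℝ) - 1)) := by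
  have hS : ∑ i, spineInit m i = 2 * m - 2 := sum_spineInit m hm
  have hSpos : 0 < ∑ i, spineInit m i := by rw [hS]; omega
  have hsq : degSqExp m n i =
      (∑ ω : Fin n → Fin m, seqProb (spineInit m) ω *
        ((deg (spineInit m) ω i : ℝ) * ((deg (spineInit m) ω i : ℝ) + 1)))
      - degExp m n i := by
    rw [degSqExp, degExp, ← Finset.sum_sub_distrib]
    exact Finset.sum_congr rfl fun ω _ => by ring
  rw [hsq, moment2 _ _ hSpos, degExp, moment1 _ _ hSpos]
  have hcast : ((∑ i, spineInit m i : ℕ) : ℝ) = 2 * (m : ℝ) - 2 := by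
    rw [hS]
    have h2m : (2 : ℕ) ≤ 2 * m := by omega
    rw [Nat.cast_sub h2m]
    push_cast
    ring
  rw [hcast]
  have hm' : (2 : ℝ) ≤ (m : ℝ) := by exact_mod_cast hm
  have d1 : 2 * (m : ℝ) - 2 ≠ 0 := by intro h; linarith
  have d2 : 2 * (m : ℝ) - 2 + 1 ≠ 0 := by intro h; linarith
  have d3 : (m : ℝ) - 1 ≠ 0 := by intro h; linarith
  have d4 : 2 * (m : ℝ) - 1 ≠ 0 := by intro h; linarith
  by_cases hi : (i.val = 0 ∨ i.val = m - 1)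
  · rw [if_pos hi]
    have hτ : spineInit m i = 1 := by simp [spineInit, hi]
    rw [hτ]
    push_cast
    rw [show (2 * (m : ℝ) - 2 + 1) = 2 * (m : ℝ) - 1 by ring]
    field_simp
    ring
  · rw [if_neg hi]
    have hτ : spineInit m i = 2 := by simp [spineInit, hi]
    rw [hτ]
    push_cast
    rw [show (2 * (m : ℝ) - 2 + 1) = 2 * (m : ℝ) - 1 by ring]
    field_simp
    ring
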